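/- For all μ⁺, μ⁻ > 0 and ϱ > 0 there exists a constant C > 0 depending only on μ⁺, μ⁻ and ϱ with the following property (trace inequality for IFE functions): for every ϱ-shape-regular triangle T, every cut configuration (D, E, n, T⁺, T⁻) as in the setup, and every local IFE pair (v⁺, v⁻, q⁺, q⁻), the piecewise-constant gradient of the piecewise velocity satisfies ‖∇v⁺‖_F² · ℓ(∂T ∩ T⁺) + ‖∇v⁻‖_F² · ℓ(∂T ∩ T⁻) ≤ C h_T⁻¹ (‖∇v⁺‖_F² |T⁺| + ‖∇v⁻‖_F² |T⁻|), where ℓ(∂T ∩ T±) denotes the total arclength of the part of the boundary of T lying in T±. -/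

import Mathlib

open MeasureTheory

noncomputable section

namespace StokesIFE

/-- Euclidean inner product on `ℝ²`. -/
def dot (x y : Fin 2 → ℝ) : ℝ := x 0 * y 0 + x 1 * y 1

/-- Euclidean length of a vector of `ℝ²`. -/
def len (x : Fin 2 → ℝ) : ℝ := Real.sqrt (dot x x)

/-- Strain tensor `ε(A) = (A + Aᵀ)/2`. -/
def eps (A : Matrix (Fin 2) (Fin 2) ℝ) : Matrix (Fin 2) (Fin 2) ℝ :=
  (2⁻¹ : ℝ) • (A + A.transpose)

/-- Cauchy stress tensor `σ(μ, A, q) = 2 μ ε(A) − q I₂`. -/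
def sig (μ : ℝ) (A : Matrix (Fin 2) (Fin 2) ℝ) (q : ℝ) : Matrix (Fin 2) (Fin 2) ℝ :=
  (2 * μ) • eps A - q • (1 : Matrix (Fin 2) (Fin 2) ℝ)

/-- Mean value of `u` over the segment `[P, Q]` with respect to arclength,
expressed through the affine parametrization of the segment. -/
def edgeMean (P Q : Fin 2 → ℝ) (u : (Fin 2 → ℝ) → ℝ) : ℝ :=
  ∫ s in (0:ℝ)..1, u (P + s • (Q - P))

/-- Two-dimensional Lebesgue area of a subset of `ℝ²`. -/
def area (s : Set (Fin 2 → ℝ)) : ℝ := (volume s).toReal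

/-- Squared Frobenius norm of a 2×2 matrix. -/
def frobSq (A : Matrix (Fin 2) (Fin 2) ℝ) : ℝ := ∑ i : Fin 2, ∑ j : Fin 2, (A i j) ^ 2

/-- A triangle `T = conv{A₁, A₂, A₃}` cut by the segment `[D, E]`, where
`D` lies in the open edge `(A₂, A₃)`, `E` lies in the open edge `(A₁, A₃)`,
and `n` is the unit normal of `E − D` pointing towards `A₃`. -/
structure CutTriangle where
  A₁ : Fin 2 → ℝ
  A₂ : Fin 2 → ℝ
  A₃ : Fin 2 → ℝ
  D : Fin 2 → ℝ
  E : Fin 2 → ℝ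
  n : Fin 2 → ℝ
  indep : AffineIndependent ℝ ![A₁, A₂, A₃]
  hD : D ∈ openSegment ℝ A₂ A₃
  hE : E ∈ openSegment ℝ A₁ A₃
  hn_unit : dot n n = 1
  hn_orth : dot n (E - D) = 0
  hn_sign : 0 < dot n (A₃ - D)

namespace CutTriangle

variable (c : CutTriangle)

/-- Tangent vector `t = (n₂, −n₁)`, the rotation of `n` by `−π/2`. -/
def t : Fin 2 → ℝ := ![c.n 1, -(c.n 0)]

/-- The closed triangle. -/
def T : Set (Fin 2 → ℝ) := convexHull ℝ {c.A₁, c.A₂, c.A₃}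

/-- The part of the triangle on the `+` side of the cut. -/
def Tplus : Set (Fin 2 → ℝ) := c.T ∩ {x | 0 ≤ dot c.n (x - c.D)}

/-- The part of the triangle on the `−` side of the cut. -/
def Tminus : Set (Fin 2 → ℝ) := c.T ∩ {x | dot c.n (x - c.D) ≤ 0}

/-- The piecewise linear function `w(x) = max(⟨n, x − D⟩, 0)`. -/
def w (x : Fin 2 → ℝ) : ℝ := max (dot c.n (x - c.D)) 0

/-- `(g, b)` represents the Crouzeix–Raviart interpolant `x ↦ ⟨g, x⟩ + b` of `u` on `T`:
an affine map whose mean value over each of the three edges coincides with that of `u`. -/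
def IsCR (u : (Fin 2 → ℝ) → ℝ) (g : Fin 2 → ℝ) (b : ℝ) : Prop :=
  edgeMean c.A₂ c.A₃ (fun x => dot g x + b) = edgeMean c.A₂ c.A₃ u ∧
  edgeMean c.A₁ c.A₃ (fun x => dot g x + b) = edgeMean c.A₁ c.A₃ u ∧
  edgeMean c.A₁ c.A₂ (fun x => dot g x + b) = edgeMean c.A₁ c.A₂ u

/-- The componentwise Crouzeix–Raviart interpolant `x ↦ Mπ x + bπ` of a vector-valued `u`. -/
def IsCRvec (u : (Fin 2 → ℝ) → Fin 2 → ℝ) (Mπ : Matrix (Fin 2) (Fin 2) ℝ)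
    (bπ : Fin 2 → ℝ) : Prop :=
  ∀ j : Fin 2, c.IsCR (fun x => u x j) (Mπ j) (bπ j)

/-- The piecewise velocity: `x ↦ Mp x + bp` on the `+` side and `x ↦ Mm x + bm`
on the `−` side. -/
def vtilde (Mp : Matrix (Fin 2) (Fin 2) ℝ) (bp : Fin 2 → ℝ)
    (Mm : Matrix (Fin 2) (Fin 2) ℝ) (bm : Fin 2 → ℝ) (x : Fin 2 → ℝ) : Fin 2 → ℝ :=
  if 0 ≤ dot c.n (x - c.D) then Mp.mulVec x + bp else Mm.mulVec x + bm

/-- The seven local degrees of freedom: edge means of the two velocity components over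
the edges `e₁ = [A₂,A₃]`, `e₂ = [A₁,A₃]`, `e₃ = [A₁,A₂]`, and the mean of the
piecewise-constant pressure over `T`. -/
def dof (Mp : Matrix (Fin 2) (Fin 2) ℝ) (bp : Fin 2 → ℝ)
    (Mm : Matrix (Fin 2) (Fin 2) ℝ) (bm : Fin 2 → ℝ) (qp qm : ℝ) : Fin 7 → ℝ :=
  ![edgeMean c.A₂ c.A₃ (fun x => c.vtilde Mp bp Mm bm x 0),
    edgeMean c.A₁ c.A₃ (fun x => c.vtilde Mp bp Mm bm x 0),
    edgeMean c.A₁ c.A₂ (fun x => c.vtilde Mp bp Mm bm x 0),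
    edgeMean c.A₂ c.A₃ (fun x => c.vtilde Mp bp Mm bm x 1),
    edgeMean c.A₁ c.A₃ (fun x => c.vtilde Mp bp Mm bm x 1),
    edgeMean c.A₁ c.A₂ (fun x => c.vtilde Mp bp Mm bm x 1),
    (area c.Tplus * qp + area c.Tminus * qm) / area c.T]

/-- A local IFE pair: affine velocities `v± = Mp/Mm · x + bp/bm` and constant pressures
`q±` satisfying the stress-jump condition (J1), continuity of the velocity on `[D,E]` (J2)
and continuity of the divergence (J3). -/
def IsIFEPair (μp μm : ℝ) (Mp : Matrix (Fin 2) (Fin 2) ℝ) (bp : Fin 2 → ℝ)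
    (Mm : Matrix (Fin 2) (Fin 2) ℝ) (bm : Fin 2 → ℝ) (qp qm : ℝ) : Prop :=
  (sig μp Mp qp).mulVec c.n = (sig μm Mm qm).mulVec c.n ∧
  (∀ x ∈ segment ℝ c.D c.E, Mp.mulVec x + bp = Mm.mulVec x + bm) ∧
  Mp.trace = Mm.trace

/-- The diameter of the triangle (its longest edge). -/
def hT : ℝ := max (len (c.A₂ - c.A₁)) (max (len (c.A₃ - c.A₁)) (len (c.A₃ - c.A₂)))

/-- The perimeter of the triangle. -/
def perim : ℝ := len (c.A₂ - c.A₁) + len (c.A₃ - c.A₁) + len (c.A₃ - c.A₂)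

/-- The inradius of the triangle, `r_T = 2|T| / perimeter`. -/
def rT : ℝ := 2 * area c.T / c.perim

/-- `ϱ`-shape-regularity: `h_T ≤ ϱ r_T`. -/
def ShapeReg (ϱ : ℝ) : Prop := c.hT ≤ ϱ * c.rT

/-- Arclength of the part of the edge `[P,Q]` lying on the `+` side of the cut. -/
def edgeLenPlus (P Q : Fin 2 → ℝ) : ℝ :=
  len (Q - P) *
    (volume {s : ℝ | s ∈ Set.Icc (0:ℝ) 1 ∧ 0 ≤ dot c.n (P + s • (Q - P) - c.D)}).toReal

/-- Arclength of the part of the edge `[P,Q]` lying on the `−` side of the cut. -/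
def edgeLenMinus (P Q : Fin 2 → ℝ) : ℝ :=
  len (Q - P) *
    (volume {s : ℝ | s ∈ Set.Icc (0:ℝ) 1 ∧ dot c.n (P + s • (Q - P) - c.D) ≤ 0}).toReal

/-- Total arclength of `∂T ∩ T⁺`. -/
def bdryLenPlus : ℝ :=
  c.edgeLenPlus c.A₂ c.A₃ + c.edgeLenPlus c.A₁ c.A₃ + c.edgeLenPlus c.A₁ c.A₂

/-- Total arclength of `∂T ∩ T⁻`. -/
def bdryLenMinus : ℝ :=
  c.edgeLenMinus c.A₂ c.A₃ + c.edgeLenMinus c.A₁ c.A₃ + c.edgeLenMinus c.A₁ c.A₂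

end CutTriangle


/-! ### Auxiliary lemmas -/

lemma csAux (n0 n1 x y z w : ℝ) (hn : n0^2 + n1^2 = 1) :
    2 * ((x-w)*(n0*n1) + (y+z)*(n1^2-n0^2)/2)^2 ≤ x^2+y^2+z^2+w^2 := by
  have h4 : ((x-w)^2+(y+z)^2)*((n0^2+n1^2)^2 - 1) = 0 := by rw [hn]; ring
  nlinarith [sq_nonneg (x+w), sq_nonneg (y-z),
    sq_nonneg ((x-w)*(n1^2-n0^2)/2 - (y+z)*(n0*n1)), h4]

lemma combineAux (d μ β f M X : ℝ) (hμ : 0 < μ)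
    (e : μ*β = 2*d*f) (cs : 2*f^2 ≤ M) (hle : X ≤ 2*M + 2*β^2) :
    X ≤ (2 + 4*d^2/μ^2) * M := by
  have hμ2 : (0:ℝ) < μ^2 := by positivity
  rw [← mul_le_mul_iff_right₀ hμ2]
  have hR : μ^2*((2 + 4*d^2/μ^2) * M) = 2*μ^2*M + 4*d^2*M := by field_simp
  rw [hR]
  have h5 : μ^2*β^2 = 4*d^2*f^2 := by linear_combination (μ*β + 2*d*f) * e
  nlinarith [mul_le_mul_of_nonneg_left hle (le_of_lt hμ2), mul_le_mul_of_nonneg_left cs (sq_nonneg d)]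

lemma sumSqAux1 (p00 p01 p10 p11 m00 m01 m10 m11 : ℝ) :
    p00^2+p01^2+p10^2+p11^2 ≤ 2*(m00^2+m01^2+m10^2+m11^2)
      + 2*((p00-m00)^2+(p01-m01)^2+(p10-m10)^2+(p11-m11)^2) := by
  nlinarith [sq_nonneg (2*m00-p00), sq_nonneg (2*m01-p01), sq_nonneg (2*m10-p10), sq_nonneg (2*m11-p11)]

lemma sumSqAux2 (p00 p01 p10 p11 m00 m01 m10 m11 : ℝ) :
    m00^2+m01^2+m10^2+m11^2 ≤ 2*(p00^2+p01^2+p10^2+p11^2)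
      + 2*((p00-m00)^2+(p01-m01)^2+(p10-m10)^2+(p11-m11)^2) := by
  nlinarith [sq_nonneg (2*p00-m00), sq_nonneg (2*p01-m01), sq_nonneg (2*p10-m10), sq_nonneg (2*p11-m11)]

lemma scalarKey (μp μm : ℝ) (hμp : 0 < μp) (hμm : 0 < μm)
    (n0 n1 : ℝ) (hn : n0^2 + n1^2 = 1)
    (p00 p01 p10 p11 m00 m01 m10 m11 : ℝ)
    (h1 : (p00-m00) * n1 - (p01-m01) * n0 = 0)
    (h2 : (p10-m10) * n1 - (p11-m11) * n0 = 0)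
    (h3 : p00 + p11 = m00 + m11)
    (hJ : μp * ((p00-p11)*(n0*n1) + (p01+p10)*(n1^2-n0^2)/2)
        = μm * ((m00-m11)*(n0*n1) + (m01+m10)*(n1^2-n0^2)/2)) :
    p00^2+p01^2+p10^2+p11^2 ≤ (2+4*(μm-μp)^2/μp^2) * (m00^2+m01^2+m10^2+m11^2) ∧
    m00^2+m01^2+m10^2+m11^2 ≤ (2+4*(μm-μp)^2/μm^2) * (p00^2+p01^2+p10^2+p11^2) := by
  obtain ⟨b00, b01, b10, b11, hb00, hb01, hb10, hb11⟩ :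
      ∃ b00 b01 b10 b11 : ℝ, b00 = p00-m00 ∧ b01 = p01-m01 ∧ b10 = p10-m10 ∧ b11 = p11-m11 :=
    ⟨_, _, _, _, rfl, rfl, rfl, rfl⟩
  have h1' : b00 * n1 - b01 * n0 = 0 := by rw [hb00, hb01]; linear_combination h1
  have h2' : b10 * n1 - b11 * n0 = 0 := by rw [hb10, hb11]; linear_combination h2
  have h3' : b00 + b11 = 0 := by rw [hb00, hb11]; linarith
  obtain ⟨β, hβ⟩ : ∃ β : ℝ, β = n1*(b00*n0 + b01*n1) - n0*(b10*n0 + b11*n1) := ⟨_, rfl⟩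
  have g1 : b00 = β * (n0*n1) := by
    rw [hβ]; linear_combination n1^3 * h1' + n0^3 * h2' + n0^2*(n0^2+n1^2) * h3' - b00*(n0^2+n1^2+1) * hn
  have g2 : b01 = β * (n1^2) := by
    rw [hβ]; linear_combination (-(n0*(n1^2+n0^2+n1^2))) * h1' + n0^2*n1 * h2' + (n0^2+n1^2)*n0*n1 * h3' - b01*(n0^2+n1^2+1) * hn
  have g3 : b10 = -(β * (n0^2)) := by
    rw [hβ]; linear_combination (-(n1^2*n0)) * h1' + n1*(n0^2+n0^2+n1^2) * h2' + (n0^2+n1^2)*n0*n1 * h3' - b10*(n0^2+n1^2+1) * hn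
  have g4 : b11 = -(β * (n0*n1)) := by
    rw [hβ]; linear_combination (-(n1^3)) * h1' - n0^3 * h2' + n1^2*(n0^2+n1^2) * h3' - b11*(n0^2+n1^2+1) * hn
  have hB : b00^2 + b01^2 + b10^2 + b11^2 = β^2 := by
    rw [g1, g2, g3, g4]; linear_combination β^2*(n0^2+n1^2+1) * hn
  have hf : (b00-b11)*(n0*n1) + (b01+b10)*(n1^2-n0^2)/2 = β/2 := by
    rw [g1, g2, g3, g4]; linear_combination (β*(n0^2+n1^2+1)/2) * hn
  have hfb : (p00-p11)*(n0*n1) + (p01+p10)*(n1^2-n0^2)/2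
      = ((m00-m11)*(n0*n1) + (m01+m10)*(n1^2-n0^2)/2) + β/2 := by
    rw [← hf, hb00, hb01, hb10, hb11]; ring
  have e1 : μp * β = 2*(μm - μp) * ((m00-m11)*(n0*n1) + (m01+m10)*(n1^2-n0^2)/2) := by
    linear_combination 2*hJ - 2*μp*hfb
  have e2 : μm * β = 2*(μm - μp) * ((p00-p11)*(n0*n1) + (p01+p10)*(n1^2-n0^2)/2) := by
    linear_combination 2*hJ - 2*μm*hfb
  have csm := csAux n0 n1 m00 m01 m10 m11 hn
  have csp := csAux n0 n1 p00 p01 p10 p11 hn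
  have hPle : p00^2+p01^2+p10^2+p11^2 ≤ 2*(m00^2+m01^2+m10^2+m11^2) + 2*β^2 := by
    have h6 := sumSqAux1 p00 p01 p10 p11 m00 m01 m10 m11
    rw [← hb00, ← hb01, ← hb10, ← hb11, hB] at h6
    exact h6
  have hmle : m00^2+m01^2+m10^2+m11^2 ≤ 2*(p00^2+p01^2+p10^2+p11^2) + 2*β^2 := by
    have h6 := sumSqAux2 p00 p01 p10 p11 m00 m01 m10 m11
    rw [← hb00, ← hb01, ← hb10, ← hb11, hB] at h6
    exact h6
  exact ⟨combineAux (μm-μp) μp β _ _ _ hμp e1 csm hPle,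
         combineAux (μm-μp) μm β _ _ _ hμm e2 csp hmle⟩

lemma finalArith (K ϱ P m lp lm ap am h : ℝ) (hK1 : 1 ≤ K) (hϱ : 0 < ϱ)
    (hP : 0 ≤ P) (hm : 0 ≤ m) (hPK : P ≤ K*m) (hmK : m ≤ K*P)
    (hlp : lp ≤ 3*h) (hlm : lm ≤ 3*h) (hap : 0 ≤ ap) (ham : 0 ≤ am)
    (hh : 0 < h) (harea : h^2 ≤ 2*ϱ*(ap+am)) :
    P*lp + m*lm ≤ 12*K*ϱ*h⁻¹*(P*ap + m*am) := by
  have hgoal : 12*K*ϱ*h⁻¹*(P*ap + m*am) = 12*K*ϱ*(P*ap + m*am)/h := by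
    field_simp
  rw [hgoal, le_div_iff₀ hh]
  have s1 : P*lp + m*lm ≤ 3*h*(P+m) := by
    nlinarith [mul_le_mul_of_nonneg_left hlp hP, mul_le_mul_of_nonneg_left hlm hm]
  have hsum1 : P + m ≤ 2*K*P := by nlinarith
  have hsum2 : P + m ≤ 2*K*m := by nlinarith
  have t2 := mul_le_mul_of_nonneg_right hsum1 hap
  have t3 := mul_le_mul_of_nonneg_right hsum2 ham
  have s2 : (P+m) * h^2 ≤ 4*K*ϱ*(P*ap + m*am) := by
    have t1 : (P+m) * h^2 ≤ (P+m) * (2*ϱ*(ap+am)) :=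
      mul_le_mul_of_nonneg_left harea (by linarith)
    nlinarith [t1, mul_le_mul_of_nonneg_left t2 (by positivity : (0:ℝ) ≤ 2*ϱ),
      mul_le_mul_of_nonneg_left t3 (by positivity : (0:ℝ) ≤ 2*ϱ)]
  nlinarith [mul_le_mul_of_nonneg_right s1 hh.le, s2]

lemma len_nonneg (x : Fin 2 → ℝ) : 0 ≤ len x := Real.sqrt_nonneg _

lemma len_pos {x : Fin 2 → ℝ} (hx : x ≠ 0) : 0 < len x := by
  have hd : dot x x = x 0 * x 0 + x 1 * x 1 := rfl
  have h0 : 0 ≤ dot x x := by rw [hd]; nlinarith [mul_self_nonneg (x 0), mul_self_nonneg (x 1)]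
  rcases h0.lt_or_eq with h | h
  · exact Real.sqrt_pos.mpr h
  · exfalso
    apply hx
    have hsum : x 0 * x 0 + x 1 * x 1 = 0 := by rw [← hd]; exact h.symm
    have h00 : x 0 * x 0 = 0 := by nlinarith [mul_self_nonneg (x 0), mul_self_nonneg (x 1)]
    have h11 : x 1 * x 1 = 0 := by nlinarith [mul_self_nonneg (x 0), mul_self_nonneg (x 1)]
    funext i
    fin_cases i
    · simpa using mul_self_eq_zero.mp h00
    · simpa using mul_self_eq_zero.mp h11

namespace CutTriangle

variable (c : CutTriangle)

lemma D_ne_E : c.D ≠ c.E := by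
  intro hDE
  rcases c.hD with ⟨a, b, ha, hb, hab, hDeq⟩
  rcases c.hE with ⟨a', b', ha', hb', hab', hEeq⟩
  have heq : a • c.A₂ + b • c.A₃ = a' • c.A₁ + b' • c.A₃ := by
    rw [hDeq, hEeq, hDE]
  have := affineIndependent_iff.mp c.indep Finset.univ ![a', -a, b'-b] (by
      simp [Fin.sum_univ_three]; linarith) (by
      simp [Fin.sum_univ_three]
      have h9 : a' • c.A₁ + b' • c.A₃ - (a • c.A₂ + b • c.A₃) = 0 := sub_eq_zero.mpr heq.symm
      linear_combination (norm := module) h9) 0 (Finset.mem_univ _)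
  simp at this
  exact absurd this (ne_of_gt ha')

lemma nsq : c.n 0 ^ 2 + c.n 1 ^ 2 = 1 := by
  have h := c.hn_unit
  simp only [dot] at h
  linear_combination h

lemma vertex_ne_12 : c.A₁ ≠ c.A₂ := by
  have := c.indep.injective.ne (show (0 : Fin 3) ≠ 1 by decide)
  simpa using this

lemma vertex_ne_13 : c.A₁ ≠ c.A₃ := by
  have := c.indep.injective.ne (show (0 : Fin 3) ≠ 2 by decide)
  simpa using this

lemma vertex_ne_23 : c.A₂ ≠ c.A₃ := by
  have := c.indep.injective.ne (show (1 : Fin 3) ≠ 2 by decide)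
  simpa using this

lemma hT_pos : 0 < c.hT := by
  have h1 : 0 < len (c.A₂ - c.A₁) := len_pos (sub_ne_zero.mpr (Ne.symm c.vertex_ne_12))
  exact lt_of_lt_of_le h1 (le_max_left _ _)

lemma edge_le_hT_1 : len (c.A₂ - c.A₁) ≤ c.hT := le_max_left _ _
lemma edge_le_hT_2 : len (c.A₃ - c.A₁) ≤ c.hT := le_trans (le_max_left _ _) (le_max_right _ _)
lemma edge_le_hT_3 : len (c.A₃ - c.A₂) ≤ c.hT := le_trans (le_max_right _ _) (le_max_right _ _)

lemma hT_le_perim : c.hT ≤ c.perim := by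
  have h1 := len_nonneg (c.A₂ - c.A₁)
  have h2 := len_nonneg (c.A₃ - c.A₁)
  have h3 := len_nonneg (c.A₃ - c.A₂)
  simp only [hT, perim]
  apply max_le (by linarith)
  exact max_le (by linarith) (by linarith)

lemma perim_pos : 0 < c.perim := lt_of_lt_of_le c.hT_pos c.hT_le_perim

lemma volume_T_lt_top : volume c.T < ⊤ := by
  have : IsCompact (convexHull ℝ ({c.A₁, c.A₂, c.A₃} : Set (Fin 2 → ℝ))) :=
    (Set.toFinite _).isCompact_convexHull ℝ
  exact this.measure_lt_top

lemma area_split : area c.T ≤ area c.Tplus + area c.Tminus := by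
  have hsub : c.T ⊆ c.Tplus ∪ c.Tminus := by
    intro x hx
    rcases le_total 0 (dot c.n (x - c.D)) with h | h
    · exact Or.inl ⟨hx, h⟩
    · exact Or.inr ⟨hx, h⟩
  have hple : volume c.Tplus ≤ volume c.T := measure_mono Set.inter_subset_left
  have hmle : volume c.Tminus ≤ volume c.T := measure_mono Set.inter_subset_left
  have hp : volume c.Tplus ≠ ⊤ := (lt_of_le_of_lt hple c.volume_T_lt_top).ne
  have hm : volume c.Tminus ≠ ⊤ := (lt_of_le_of_lt hmle c.volume_T_lt_top).ne
  have h1 : volume c.T ≤ volume c.Tplus + volume c.Tminus :=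
    le_trans (measure_mono hsub) (measure_union_le _ _)
  calc area c.T = (volume c.T).toReal := rfl
    _ ≤ (volume c.Tplus + volume c.Tminus).toReal :=
        ENNReal.toReal_mono (by rw [ENNReal.add_ne_top]; exact ⟨hp, hm⟩) h1
    _ = area c.Tplus + area c.Tminus := ENNReal.toReal_add hp hm

lemma edgeLenPlus_le (P Q : Fin 2 → ℝ) : c.edgeLenPlus P Q ≤ len (Q - P) := by
  have h1 : volume {s : ℝ | s ∈ Set.Icc (0:ℝ) 1 ∧ 0 ≤ dot c.n (P + s • (Q - P) - c.D)} ≤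
      volume (Set.Icc (0:ℝ) 1) := measure_mono fun s hs => hs.1
  have h2 : (volume {s : ℝ | s ∈ Set.Icc (0:ℝ) 1 ∧ 0 ≤ dot c.n (P + s • (Q - P) - c.D)}).toReal ≤ 1 := by
    have := ENNReal.toReal_mono (by simp) h1
    simpa [Real.volume_Icc] using this
  calc c.edgeLenPlus P Q ≤ len (Q - P) * 1 := by
        apply mul_le_mul_of_nonneg_left h2 (len_nonneg _)
    _ = len (Q - P) := mul_one _

lemma edgeLenMinus_le (P Q : Fin 2 → ℝ) : c.edgeLenMinus P Q ≤ len (Q - P) := by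
  have h1 : volume {s : ℝ | s ∈ Set.Icc (0:ℝ) 1 ∧ dot c.n (P + s • (Q - P) - c.D) ≤ 0} ≤
      volume (Set.Icc (0:ℝ) 1) := measure_mono fun s hs => hs.1
  have h2 : (volume {s : ℝ | s ∈ Set.Icc (0:ℝ) 1 ∧ dot c.n (P + s • (Q - P) - c.D) ≤ 0}).toReal ≤ 1 := by
    have := ENNReal.toReal_mono (by simp) h1
    simpa [Real.volume_Icc] using this
  calc c.edgeLenMinus P Q ≤ len (Q - P) * 1 := by
        apply mul_le_mul_of_nonneg_left h2 (len_nonneg _)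
    _ = len (Q - P) := mul_one _

lemma edgeLenPlus_nonneg (P Q : Fin 2 → ℝ) : 0 ≤ c.edgeLenPlus P Q :=
  mul_nonneg (len_nonneg _) ENNReal.toReal_nonneg

lemma edgeLenMinus_nonneg (P Q : Fin 2 → ℝ) : 0 ≤ c.edgeLenMinus P Q :=
  mul_nonneg (len_nonneg _) ENNReal.toReal_nonneg

lemma bdryLenPlus_le : c.bdryLenPlus ≤ 3 * c.hT := by
  have h1 := le_trans (c.edgeLenPlus_le c.A₂ c.A₃) c.edge_le_hT_3
  have h2 := le_trans (c.edgeLenPlus_le c.A₁ c.A₃) c.edge_le_hT_2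
  have h3 := le_trans (c.edgeLenPlus_le c.A₁ c.A₂) c.edge_le_hT_1
  simp only [bdryLenPlus]; linarith

lemma bdryLenMinus_le : c.bdryLenMinus ≤ 3 * c.hT := by
  have h1 := le_trans (c.edgeLenMinus_le c.A₂ c.A₃) c.edge_le_hT_3
  have h2 := le_trans (c.edgeLenMinus_le c.A₁ c.A₃) c.edge_le_hT_2
  have h3 := le_trans (c.edgeLenMinus_le c.A₁ c.A₂) c.edge_le_hT_1
  simp only [bdryLenMinus]; linarith

lemma bdryLenPlus_nonneg : 0 ≤ c.bdryLenPlus :=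
  add_nonneg (add_nonneg (c.edgeLenPlus_nonneg _ _) (c.edgeLenPlus_nonneg _ _)) (c.edgeLenPlus_nonneg _ _)

lemma bdryLenMinus_nonneg : 0 ≤ c.bdryLenMinus :=
  add_nonneg (add_nonneg (c.edgeLenMinus_nonneg _ _) (c.edgeLenMinus_nonneg _ _)) (c.edgeLenMinus_nonneg _ _)

lemma hT_sq_le {ϱ : ℝ} (hϱ : 0 < ϱ) (hreg : c.ShapeReg ϱ) : c.hT ^ 2 ≤ 2 * ϱ * area c.T := by
  have hp := c.perim_pos
  have h2 : c.hT * c.perim ≤ 2 * ϱ * area c.T := by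
    rw [← le_div_iff₀ hp]
    calc c.hT ≤ ϱ * (2 * area c.T / c.perim) := hreg
      _ = 2 * ϱ * area c.T / c.perim := by ring
  calc c.hT ^ 2 = c.hT * c.hT := sq c.hT
    _ ≤ c.hT * c.perim := mul_le_mul_of_nonneg_left c.hT_le_perim c.hT_pos.le
    _ ≤ 2 * ϱ * area c.T := h2

end CutTriangle

/-- trace inequality for IFE functions: for all `μ⁺, μ⁻ > 0` and `ϱ > 0`
there is `C > 0` depending only on `μ⁺, μ⁻, ϱ` such that for every `ϱ`-shape-regular cut
triangle and every local IFE pair,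
`‖∇v⁺‖_F² ℓ(∂T ∩ T⁺) + ‖∇v⁻‖_F² ℓ(∂T ∩ T⁻) ≤ C h_T⁻¹ (‖∇v⁺‖_F² |T⁺| + ‖∇v⁻‖_F² |T⁻|)`. -/
theorem statement10 (μp μm ϱ : ℝ) (hμp : 0 < μp) (hμm : 0 < μm) (hϱ : 0 < ϱ) :
    ∃ C : ℝ, 0 < C ∧ ∀ (c : CutTriangle), c.ShapeReg ϱ →
      ∀ (Mp Mm : Matrix (Fin 2) (Fin 2) ℝ) (bp bm : Fin 2 → ℝ) (qp qm : ℝ),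
        c.IsIFEPair μp μm Mp bp Mm bm qp qm →
        frobSq Mp * c.bdryLenPlus + frobSq Mm * c.bdryLenMinus ≤
          C * (c.hT)⁻¹ * (frobSq Mp * area c.Tplus + frobSq Mm * area c.Tminus) := by
  obtain ⟨K, hK1, hKp, hKm⟩ : ∃ K : ℝ, 1 ≤ K ∧ 2+4*(μm-μp)^2/μp^2 ≤ K ∧ 2+4*(μm-μp)^2/μm^2 ≤ K := by
    refine ⟨max (2+4*(μm-μp)^2/μp^2) (2+4*(μm-μp)^2/μm^2), ?_, le_max_left _ _, le_max_right _ _⟩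
    have h0 : (0:ℝ) ≤ 4*(μm-μp)^2/μp^2 := by positivity
    exact le_trans (by linarith) (le_max_left _ _)
  have hK0 : (0:ℝ) < K := lt_of_lt_of_le one_pos hK1
  refine ⟨12 * K * ϱ, by positivity, ?_⟩
  intro c hreg Mp Mm bp bm qp qm hIFE
  obtain ⟨hJ1, hJ2, hJ3⟩ := hIFE
  have hn := c.nsq
  -- divergence condition
  have h3 : Mp 0 0 + Mp 1 1 = Mm 0 0 + Mm 1 1 := by
    simpa [Matrix.trace, Matrix.diag, Fin.sum_univ_two] using hJ3
  -- stress jump condition, tangential scalar form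
  have hJ : μp * ((Mp 0 0 - Mp 1 1)*(c.n 0 * c.n 1) + (Mp 0 1 + Mp 1 0)*((c.n 1)^2-(c.n 0)^2)/2)
      = μm * ((Mm 0 0 - Mm 1 1)*(c.n 0 * c.n 1) + (Mm 0 1 + Mm 1 0)*((c.n 1)^2-(c.n 0)^2)/2) := by
    have eq0 := congrFun hJ1 0
    have eq1 := congrFun hJ1 1
    simp [sig, eps, Matrix.mulVec, dotProduct, Fin.sum_univ_two, Matrix.one_apply,
      Matrix.sub_apply, Matrix.smul_apply, Matrix.add_apply, Matrix.transpose_apply] at eq0 eq1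
    linear_combination (c.n 1/2) * eq0 - (c.n 0/2) * eq1
  -- velocity continuity: tangential kernel conditions
  have hDE := c.D_ne_E
  have horth : c.n 0 * (c.E 0 - c.D 0) + c.n 1 * (c.E 1 - c.D 1) = 0 := by
    have h := c.hn_orth
    simp only [dot, Pi.sub_apply] at h
    linear_combination h
  obtain ⟨k, hk⟩ : ∃ k : ℝ, k = c.n 1 * (c.E 0 - c.D 0) - c.n 0 * (c.E 1 - c.D 1) := ⟨_, rfl⟩
  have hu0 : c.E 0 - c.D 0 = k * c.n 1 := by
    rw [hk]; linear_combination c.n 0 * horth - (c.E 0 - c.D 0) * hn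
  have hu1 : c.E 1 - c.D 1 = -(k * c.n 0) := by
    rw [hk]; linear_combination c.n 1 * horth - (c.E 1 - c.D 1) * hn
  have hk0 : k ≠ 0 := by
    intro h0
    apply hDE
    rw [h0] at hu0 hu1
    funext i
    fin_cases i
    · show c.D 0 = c.E 0
      simp only [zero_mul] at hu0
      linarith
    · show c.D 1 = c.E 1
      simp only [zero_mul, neg_zero] at hu1
      linarith
  have hD2 := hJ2 c.D (left_mem_segment ℝ c.D c.E)
  have hE2 := hJ2 c.E (right_mem_segment ℝ c.D c.E)
  have hD20 := congrFun hD2 0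
  have hD21 := congrFun hD2 1
  have hE20 := congrFun hE2 0
  have hE21 := congrFun hE2 1
  simp only [Matrix.mulVec, dotProduct, Fin.sum_univ_two, Pi.add_apply]
    at hD20 hD21 hE20 hE21
  have h1 : (Mp 0 0 - Mm 0 0) * c.n 1 - (Mp 0 1 - Mm 0 1) * c.n 0 = 0 := by
    apply mul_left_cancel₀ hk0
    rw [mul_zero]
    linear_combination hE20 - hD20 - (Mp 0 0 - Mm 0 0) * hu0 - (Mp 0 1 - Mm 0 1) * hu1
  have h2 : (Mp 1 0 - Mm 1 0) * c.n 1 - (Mp 1 1 - Mm 1 1) * c.n 0 = 0 := by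
    apply mul_left_cancel₀ hk0
    rw [mul_zero]
    linear_combination hE21 - hD21 - (Mp 1 0 - Mm 1 0) * hu0 - (Mp 1 1 - Mm 1 1) * hu1
  obtain ⟨hPK', hmK'⟩ := scalarKey μp μm hμp hμm (c.n 0) (c.n 1) hn
    (Mp 0 0) (Mp 0 1) (Mp 1 0) (Mp 1 1) (Mm 0 0) (Mm 0 1) (Mm 1 0) (Mm 1 1) h1 h2 h3 hJ
  have hfp : frobSq Mp = (Mp 0 0)^2 + (Mp 0 1)^2 + (Mp 1 0)^2 + (Mp 1 1)^2 := by
    simp [frobSq, Fin.sum_univ_two]; ring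
  have hfm : frobSq Mm = (Mm 0 0)^2 + (Mm 0 1)^2 + (Mm 1 0)^2 + (Mm 1 1)^2 := by
    simp [frobSq, Fin.sum_univ_two]; ring
  have hfp0 : 0 ≤ frobSq Mp := by rw [hfp]; positivity
  have hfm0 : 0 ≤ frobSq Mm := by rw [hfm]; positivity
  have hPK : frobSq Mp ≤ K * frobSq Mm := by
    rw [hfp, hfm]
    calc (Mp 0 0)^2 + (Mp 0 1)^2 + (Mp 1 0)^2 + (Mp 1 1)^2
        ≤ (2+4*(μm-μp)^2/μp^2) * ((Mm 0 0)^2 + (Mm 0 1)^2 + (Mm 1 0)^2 + (Mm 1 1)^2) := hPK'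
      _ ≤ K * ((Mm 0 0)^2 + (Mm 0 1)^2 + (Mm 1 0)^2 + (Mm 1 1)^2) :=
          mul_le_mul_of_nonneg_right hKp (by positivity)
  have hmK : frobSq Mm ≤ K * frobSq Mp := by
    rw [hfp, hfm]
    calc (Mm 0 0)^2 + (Mm 0 1)^2 + (Mm 1 0)^2 + (Mm 1 1)^2
        ≤ (2+4*(μm-μp)^2/μm^2) * ((Mp 0 0)^2 + (Mp 0 1)^2 + (Mp 1 0)^2 + (Mp 1 1)^2) := hmK'
      _ ≤ K * ((Mp 0 0)^2 + (Mp 0 1)^2 + (Mp 1 0)^2 + (Mp 1 1)^2) :=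
          mul_le_mul_of_nonneg_right hKm (by positivity)
  -- geometry
  have hh := c.hT_pos
  have hA := c.hT_sq_le hϱ hreg
  have hsplit := c.area_split
  have hap : 0 ≤ area c.Tplus := ENNReal.toReal_nonneg
  have ham : 0 ≤ area c.Tminus := ENNReal.toReal_nonneg
  have hlp := c.bdryLenPlus_le
  have hlm := c.bdryLenMinus_le
  have harea : c.hT^2 ≤ 2*ϱ*(area c.Tplus + area c.Tminus) := by
    have h5 := mul_le_mul_of_nonneg_left hsplit (by positivity : (0:ℝ) ≤ 2*ϱ)
    linarith [hA, h5]
  exact finalArith K ϱ (frobSq Mp) (frobSq Mm) c.bdryLenPlus c.bdryLenMinus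
    (area c.Tplus) (area c.Tminus) c.hT hK1 hϱ hfp0 hfm0 hPK hmK hlp hlm hap ham hh harea

end StokesIFE
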